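/- There exists a constant C₃ = C₃(m) > 0 such that: for all m-dimensional linear subspaces U, V of ℝⁿ, every orthonormal basis (e₁,…,e_m) of V, and every ϑ ∈ (0,1), if dist(e_i, U) = |Q_U(e_i)| ≤ ϑ for every i = 1,…,m, then d_G(U,V) ≤ C₃·ϑ. -/

import Mathlib

open Metric MeasureTheory Filter
open scoped RealInnerProductSpace ENNReal NNReal

noncomputable section

abbrev Euc (n : ℕ) := EuclideanSpace ℝ (Fin n)

variable {n : ℕ}

/-- Orthogonal projection onto a subspace, as a continuous linear map on the whole space. -/
noncomputable def projCLM (U : Submodule ℝ (Euc n)) : Euc n →L[ℝ] Euc n :=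
  U.subtypeL.comp (Submodule.orthogonalProjection U)

/-- Orthogonal projection onto the orthogonal complement. -/
noncomputable def QCLM (U : Submodule ℝ (Euc n)) : Euc n →L[ℝ] Euc n :=
  projCLM Uᗮ

/-- The metric on the Grassmannian: operator norm distance of orthogonal projections. -/
noncomputable def dG (U V : Submodule ℝ (Euc n)) : ℝ :=
  ‖projCLM U - projCLM V‖

/-- The cone with axis `Hᗮ` and "angle" `δ`. -/
def angCone (δ : ℝ) (H : Submodule ℝ (Euc n)) : Set (Euc n) :=
  {x | δ * ‖x‖ ≤ ‖QCLM H x‖}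

/-- The shell (n-annulus) of radii `r` and `R`. -/
def shell (r R : ℝ) : Set (Euc n) :=
  Metric.ball (0 : Euc n) R \ Metric.closedBall (0 : Euc n) r

/-- Conical cap: intersection of a cone and a shell. -/
def conicalCap (δ : ℝ) (H : Submodule ℝ (Euc n)) (r R : ℝ) : Set (Euc n) :=
  angCone δ H ∩ shell r R

/-- Symmetrized Hausdorff-type distance: sum of the two one-sided deviations. -/
noncomputable def hDistSum (A B : Set (Euc n)) : ℝ :=
  (⨆ y : A, Metric.infDist (y : Euc n) B) + (⨆ y : B, Metric.infDist (y : Euc n) A)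

/-- Jones β-number (closed-ball version). -/
noncomputable def betaBar (m : ℕ) (S : Set (Euc n)) (x : Euc n) (r : ℝ) : ℝ :=
  (1/r) * ⨅ H : {H : Submodule ℝ (Euc n) // Module.finrank ℝ H = m},
    ⨆ z : ↥(S ∩ Metric.closedBall x r), ‖QCLM H.1 ((z : Euc n) - x)‖

/-- Jones β-number (open-ball version). -/
noncomputable def betaOpen (m : ℕ) (S : Set (Euc n)) (x : Euc n) (r : ℝ) : ℝ :=
  (1/r) * ⨅ H : {H : Submodule ℝ (Euc n) // Module.finrank ℝ H = m},
    ⨆ z : ↥(S ∩ Metric.ball x r), ‖QCLM H.1 ((z : Euc n) - x)‖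

/-- Reifenberg θ-number (closed-ball version). -/
noncomputable def thetaBar (m : ℕ) (S : Set (Euc n)) (x : Euc n) (r : ℝ) : ℝ :=
  (1/r) * ⨅ H : {H : Submodule ℝ (Euc n) // Module.finrank ℝ H = m},
    hDistSum (S ∩ Metric.closedBall x r)
      ((fun v => x + v) '' (H.1 : Set (Euc n)) ∩ Metric.closedBall x r)

/-- Reifenberg θ-number (open-ball version). -/
noncomputable def thetaOpen (m : ℕ) (S : Set (Euc n)) (x : Euc n) (r : ℝ) : ℝ :=
  (1/r) * ⨅ H : {H : Submodule ℝ (Euc n) // Module.finrank ℝ H = m},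
    hDistSum (S ∩ Metric.ball x r)
      ((fun v => x + v) '' (H.1 : Set (Euc n)) ∩ Metric.ball x r)

/-- Discrete Menger-type curvature of an `(m+2)`-tuple of points. -/
noncomputable def discCurv (m : ℕ) (x : Fin (m+2) → Euc n) : ℝ :=
  (μH[((m : ℝ) + 1)] (convexHull ℝ (Set.range x))).toReal / Metric.diam (Set.range x) ^ (m+2)

/-- Iterated lower integral over `k` copies of a measure. -/
noncomputable def multiLIntegral (μ : Measure (Euc n)) :
    (k : ℕ) → ((Fin k → Euc n) → ℝ≥0∞) → ℝ≥0∞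
  | 0, f => f Fin.elim0
  | k+1, f => ∫⁻ x, multiLIntegral μ k (fun v => f (Fin.cons x v)) ∂μ

/-- The `p`-energy of a set: the integral of `K^p` over `(m+2)`-tuples of points of `S`,
with respect to the `m`-dimensional Hausdorff measure restricted to `S`. -/
noncomputable def energy (m : ℕ) (p : ℝ) (S : Set (Euc n)) : ℝ≥0∞ :=
  multiLIntegral ((μH[(m : ℝ)]).restrict S) (m+2) fun x => ENNReal.ofReal (discCurv m x ^ p)

/-- The class `V_k(η,d)` of `(η,d)`-voluminous `(k+1)`-simplices. -/
def IsVol (k : ℕ) (η d : ℝ) (x : Fin (k+2) → Euc n) : Prop :=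
  (∃ c : Euc n, convexHull ℝ (Set.range x) ⊆ Metric.closedBall c d) ∧
  ENNReal.ofReal ((η * d) ^ k) ≤
    μH[(k : ℝ)] (convexHull ℝ (Set.range fun i : Fin (k+1) => x i.castSucc)) ∧
  η * d ≤ Metric.infDist (x (Fin.last (k+1)))
    (affineSpan ℝ (Set.range fun i : Fin (k+1) => x i.castSucc) : Set (Euc n))

/-- Pseudo-distance between two simplices given by vertex tuples. -/
noncomputable def simplexDist (k : ℕ) (x y : Fin (k+2) → Euc n) : ℝ :=
  ⨅ σ : Equiv.Perm (Fin (k+2)), ⨆ i, dist (x i) (y (σ i))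

/-- Best approximating `m`-planes for `S` in the closed ball `B̄(x,r)`. -/
def BAP (m : ℕ) (S : Set (Euc n)) (x : Euc n) (r : ℝ) : Set (Submodule ℝ (Euc n)) :=
  {H | Module.finrank ℝ H = m ∧
    hDistSum (S ∩ Metric.closedBall x r)
      ((fun v => x + v) '' (H : Set (Euc n)) ∩ Metric.closedBall x r) ≤ r * thetaBar m S x r}

/-- `m`-fine sets with constants `A`, `R`, `M`. -/
def IsFine (m : ℕ) (S : Set (Euc n)) (A R M : ℝ) : Prop :=
  IsCompact S ∧ 0 < A ∧ 0 < R ∧ 2 ≤ M ∧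
  (∀ x ∈ S, ∀ r : ℝ, 0 < r → r ≤ R →
    ENNReal.ofReal (A * r ^ m) ≤ μH[(m : ℝ)] (S ∩ Metric.ball x r)) ∧
  (∀ x ∈ S, ∀ r : ℝ, 0 < r → r ≤ R → thetaBar m S x r ≤ M * betaBar m S x r)

/-- `T` is the (m-dimensional) tangent plane of `S` at `x`: the limit in the Grassmannian
metric of best approximating planes as the scale tends to `0`. -/
def IsTangentAt (m : ℕ) (S : Set (Euc n)) (x : Euc n) (T : Submodule ℝ (Euc n)) : Prop :=
  Module.finrank ℝ T = m ∧
  ∀ ε > 0, ∃ r₀ > 0, ∀ r : ℝ, 0 < r → r ≤ r₀ → ∀ H ∈ BAP m S x r, dG T H ≤ ε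

lemma projCLM_mem (U : Submodule ℝ (Euc n)) (x : Euc n) : projCLM U x ∈ U :=
  (Submodule.orthogonalProjection U x).2

lemma QCLM_mem (U : Submodule ℝ (Euc n)) (x : Euc n) : QCLM U x ∈ Uᗮ :=
  (Submodule.orthogonalProjection Uᗮ x).2

lemma decompP (U : Submodule ℝ (Euc n)) (x : Euc n) : x = projCLM U x + QCLM U x :=
  (Submodule.starProjection_add_starProjection_orthogonal (K := U) x).symm

lemma pythP (U : Submodule ℝ (Euc n)) (x : Euc n) :
    ‖x‖^2 = ‖projCLM U x‖^2 + ‖QCLM U x‖^2 := by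
  have h0 : ⟪projCLM U x, QCLM U x⟫ = 0 :=
    Submodule.inner_right_of_mem_orthogonal (projCLM_mem U x) (QCLM_mem U x)
  conv_lhs => rw [decompP U x]
  rw [norm_add_sq_real, h0]; ring

lemma norm_projP_le (U : Submodule ℝ (Euc n)) (x : Euc n) : ‖projCLM U x‖ ≤ ‖x‖ := by
  have := pythP U x
  nlinarith [norm_nonneg (projCLM U x), norm_nonneg (QCLM U x), norm_nonneg x]

lemma norm_QP_le (U : Submodule ℝ (Euc n)) (x : Euc n) : ‖QCLM U x‖ ≤ ‖x‖ := by
  have := pythP U x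
  nlinarith [norm_nonneg (projCLM U x), norm_nonneg (QCLM U x), norm_nonneg x]

lemma QCLM_eq_zero (V : Submodule ℝ (Euc n)) {x : Euc n} (hx : x ∈ V) : QCLM V x = 0 := by
  have : Submodule.orthogonalProjection Vᗮ x = 0 :=
    Submodule.orthogonalProjectionOnto_apply_of_mem_orthogonal
      (Submodule.le_orthogonal_orthogonal V hx)
  simp [QCLM, projCLM, this]

lemma lemA {m : ℕ} {U V : Submodule ℝ (Euc n)} {e : Fin m → Euc n}
    (he : Orthonormal ℝ e) (hsp : Submodule.span ℝ (Set.range e) = V)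
    {ϑ : ℝ} (hQ : ∀ i, ‖QCLM U (e i)‖ ≤ ϑ) {x : Euc n} (hx : x ∈ V) :
    ‖QCLM U x‖ ≤ m * ϑ * ‖x‖ := by
  rw [← hsp] at hx
  obtain ⟨c, hc⟩ := (Submodule.mem_span_range_iff_exists_fun ℝ).mp hx
  have hci : ∀ i, |c i| ≤ ‖x‖ := by
    intro i
    have h1 : ⟪e i, x⟫ = c i := by rw [← hc]; exact he.inner_right_fintype c i
    calc |c i| = |⟪e i, x⟫| := by rw [h1]
      _ ≤ ‖e i‖ * ‖x‖ := abs_real_inner_le_norm _ _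
      _ = ‖x‖ := by rw [he.1 i, one_mul]
  calc ‖QCLM U x‖ = ‖∑ i, c i • QCLM U (e i)‖ := by
        rw [← hc, map_sum]; simp_rw [_root_.map_smul]
    _ ≤ ∑ i, ‖c i • QCLM U (e i)‖ := norm_sum_le _ _
    _ ≤ ∑ _i : Fin m, ‖x‖ * ϑ := by
        refine Finset.sum_le_sum fun i _ => ?_
        rw [norm_smul, Real.norm_eq_abs]
        exact mul_le_mul (hci i) (hQ i) (norm_nonneg _) (norm_nonneg _)
    _ = m * ϑ * ‖x‖ := by rw [Finset.sum_const, Finset.card_univ, Fintype.card_fin]; ring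



set_option maxHeartbeats 1000000

/-- if an orthonormal basis of `V` lies within distance `ϑ` of `U`,
then `d_G(U,V) ≤ C₃(m)·ϑ`. -/
theorem statement2 (m : ℕ) (hm : 0 < m) :
    ∃ C₃ > (0:ℝ), ∀ (n : ℕ), m < n →
    ∀ (U V : Submodule ℝ (Euc n)),
      Module.finrank ℝ U = m → Module.finrank ℝ V = m →
      ∀ e : Fin m → Euc n, Orthonormal ℝ e → Submodule.span ℝ (Set.range e) = V →
      ∀ ϑ : ℝ, ϑ ∈ Set.Ioo (0:ℝ) 1 →
      (∀ i, ‖QCLM U (e i)‖ ≤ ϑ) →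
      dG U V ≤ C₃ * ϑ := by

  refine ⟨4 * m, by positivity, ?_⟩
  intro n hn U V hU hV e he hsp ϑ hϑ hQ
  obtain ⟨hϑ0, hϑ1⟩ := hϑ
  have hA : ∀ x ∈ V, ‖QCLM U x‖ ≤ m * ϑ * ‖x‖ := fun x hx => lemA he hsp hQ hx
  have hmϑ0 : (0:ℝ) ≤ m * ϑ := by positivity
  have key : ∀ x : Euc n, ‖(projCLM U - projCLM V) x‖ ≤ 4 * m * ϑ * ‖x‖ := by
    intro x
    rw [ContinuousLinearMap.sub_apply]
    rcases le_or_gt (2 * ((m:ℝ) * ϑ)) 1 with hsm | hlg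
    · -- small angle case
      have hF : ∀ u ∈ U, ‖QCLM V u‖ ≤ 2 * ((m:ℝ) * ϑ) * ‖u‖ := by
        intro u hu
        set L : V →ₗ[ℝ] U := ((Submodule.orthogonalProjection U).toLinearMap).comp V.subtype with hL
        have hproj : ∀ z : V, projCLM U (z : Euc n) = (L z : Euc n) := fun z => rfl
        have hinj : Function.Injective L := by
          rw [← LinearMap.ker_eq_bot, LinearMap.ker_eq_bot']
          intro v hv0
          have h4 : projCLM U ((v : Euc n)) = 0 := by rw [hproj v, hv0]; rfl
          have h5 := decompP U (v : Euc n)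
          rw [h4, zero_add] at h5
          have h6 := hA _ v.2
          rw [← h5] at h6
          have h7 : ‖(v : Euc n)‖ = 0 := by nlinarith [norm_nonneg (v : Euc n)]
          have h8 : (v : Euc n) = 0 := norm_eq_zero.mp h7
          exact Subtype.ext h8
        have hsurj : Function.Surjective L :=
          (LinearMap.injective_iff_surjective_of_finrank_eq_finrank
            (hV.trans hU.symm)).mp hinj
        obtain ⟨v, hv⟩ := hsurj ⟨u, hu⟩
        have hvu : projCLM U (v : Euc n) = u := by rw [hproj v, hv]
        have hQv : ‖QCLM U (v : Euc n)‖ ≤ m * ϑ * ‖(v : Euc n)‖ := hA _ v.2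
        have hQ2 : ‖QCLM U (v : Euc n)‖ ≤ (1/2) * ‖(v : Euc n)‖ := by
          nlinarith [norm_nonneg (v : Euc n)]
        have hpy := pythP U (v : Euc n)
        rw [hvu] at hpy
        have hvle : ‖(v : Euc n)‖ ≤ 2 * ‖u‖ := by
          nlinarith [norm_nonneg (v : Euc n), norm_nonneg u,
            norm_nonneg (QCLM U (v : Euc n)), sq_nonneg (‖(v : Euc n)‖ - 2 * ‖u‖)]
        have hdc := decompP U (v : Euc n)
        rw [hvu] at hdc
        have hsub : u - (v : Euc n) = -(QCLM U (v : Euc n)) := by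
          conv_lhs => rw [hdc]
          abel
        calc ‖QCLM V u‖ = ‖QCLM V (u - (v : Euc n))‖ := by
              rw [map_sub, QCLM_eq_zero V v.2, sub_zero]
          _ ≤ ‖u - (v : Euc n)‖ := norm_QP_le _ _
          _ = ‖QCLM U (v : Euc n)‖ := by rw [hsub, norm_neg]
          _ ≤ m * ϑ * ‖(v : Euc n)‖ := hQv
          _ ≤ m * ϑ * (2 * ‖u‖) := mul_le_mul_of_nonneg_left hvle hmϑ0
          _ = 2 * ((m:ℝ) * ϑ) * ‖u‖ := by ring
      have hG : ∀ y ∈ Vᗮ, ‖projCLM U y‖ ≤ 2 * ((m:ℝ) * ϑ) * ‖y‖ := by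
        intro y hy
        have hz : ⟪QCLM U y, projCLM U y⟫ = 0 := by
          rw [real_inner_comm]
          exact Submodule.inner_right_of_mem_orthogonal (projCLM_mem U y) (QCLM_mem U y)
        have hyp : y - projCLM U y = QCLM U y :=
          (eq_sub_of_add_eq' (decompP U y).symm).symm
        have h1 : ⟪y, projCLM U y⟫ = ‖projCLM U y‖ ^ 2 := by
          have hsubin : ⟪y - projCLM U y, projCLM U y⟫
              = ⟪y, projCLM U y⟫ - ⟪projCLM U y, projCLM U y⟫ := inner_sub_left _ _ _
          rw [hyp, hz] at hsubin
          have hself := real_inner_self_eq_norm_sq (projCLM U y)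
          linarith
        have hz2 : ⟪y, projCLM V (projCLM U y)⟫ = 0 := by
          rw [real_inner_comm]
          exact Submodule.inner_right_of_mem_orthogonal (projCLM_mem V _) hy
        have h2 : ⟪y, projCLM U y⟫ = ⟪y, QCLM V (projCLM U y)⟫ := by
          conv_lhs => rw [decompP V (projCLM U y)]
          rw [inner_add_right, hz2, zero_add]
        have h3 : ⟪y, QCLM V (projCLM U y)⟫ ≤ ‖y‖ * ‖QCLM V (projCLM U y)‖ :=
          real_inner_le_norm _ _
        have h4 : ‖QCLM V (projCLM U y)‖ ≤ 2 * ((m:ℝ) * ϑ) * ‖projCLM U y‖ :=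
          hF _ (projCLM_mem U y)
        rcases eq_or_ne ‖projCLM U y‖ 0 with h0 | h0
        · rw [h0]; positivity
        · have hpos : 0 < ‖projCLM U y‖ := lt_of_le_of_ne (norm_nonneg _) (Ne.symm h0)
          nlinarith [norm_nonneg y]
      have h1 : QCLM V x = x - projCLM V x := eq_sub_of_add_eq' (decompP V x).symm
      have h2 : QCLM U (projCLM V x) = projCLM V x - projCLM U (projCLM V x) :=
        eq_sub_of_add_eq' (decompP U (projCLM V x)).symm
      have hid : projCLM U x - projCLM V x
          = projCLM U (QCLM V x) - QCLM U (projCLM V x) := by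
        rw [h1, h2, map_sub]
        abel
      rw [hid]
      calc ‖projCLM U (QCLM V x) - QCLM U (projCLM V x)‖
          ≤ ‖projCLM U (QCLM V x)‖ + ‖QCLM U (projCLM V x)‖ := norm_sub_le _ _
        _ ≤ 2 * ((m:ℝ) * ϑ) * ‖QCLM V x‖ + m * ϑ * ‖projCLM V x‖ :=
            add_le_add (hG _ (QCLM_mem V x)) (hA _ (projCLM_mem V x))
        _ ≤ 2 * ((m:ℝ) * ϑ) * ‖x‖ + m * ϑ * ‖x‖ := by
            gcongr <;> [exact norm_QP_le V x; exact norm_projP_le V x]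
        _ ≤ 4 * m * ϑ * ‖x‖ := by nlinarith [norm_nonneg x]
    · calc ‖projCLM U x - projCLM V x‖ ≤ ‖projCLM U x‖ + ‖projCLM V x‖ := norm_sub_le _ _
        _ ≤ ‖x‖ + ‖x‖ := add_le_add (norm_projP_le U x) (norm_projP_le V x)
        _ ≤ 4 * m * ϑ * ‖x‖ := by nlinarith [norm_nonneg x]
  rw [dG, show (4:ℝ) * m * ϑ = 4 * m * ϑ by ring]
  exact ContinuousLinearMap.opNorm_le_bound _ (by positivity) key
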